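/- Let X be a metric space, S a family of closed subsets of X, and f : S → S a map which preserves left Hausdorff convergence, i.e. for every sequence (λ_i) in S and every μ ∈ S one has d⃗(λ_i, μ) → 0 if and only if d⃗(f(λ_i), f(μ)) → 0. Then f preserves inclusion in both directions: for all λ, μ ∈ S, λ ⊆ μ if and only if f(λ) ⊆ f(μ). -/

import Mathlib

open EMetric ENNReal Filter

/-- The left Hausdorff extended distance from `K` to `L`:
`d⃗(K, L) = ⨆ x ∈ K, infEdist x L`. -/
noncomputable def leftHausdorffEdist {X : Type*} [MetricSpace X] (K L : Set X) : ℝ≥0∞ :=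
  ⨆ x ∈ K, infEdist x L

lemma leftHausdorffEdist_eq_zero_iff {X : Type*} [MetricSpace X] {K L : Set X}
    (hL : IsClosed L) : leftHausdorffEdist K L = 0 ↔ K ⊆ L := by
  simp only [leftHausdorffEdist, iSup_eq_zero, infEdist_zero_of_mem, ← mem_closure_iff_infEdist_zero,
    hL.closure_eq]
  exact forall₂_congr fun x _ => by
    rw [show infEdist x L = Metric.infEDist x L from rfl, ← Metric.mem_closure_iff_infEDist_zero,
      hL.closure_eq]

/-- If `S` is a family of closed subsets and `f : S → S` preserves left
Hausdorff convergence of sequences, then `f` preserves inclusion in both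
directions: `λ ⊆ μ` iff `f λ ⊆ f μ`. -/
theorem preserves_inclusion_of_preserves_convergence {X : Type*} [MetricSpace X]
    (S : Set (Set X)) (hS : ∀ A ∈ S, IsClosed A) (f : ↥S → ↥S)
    (hf : ∀ (l : ℕ → ↥S) (μ : ↥S),
      Tendsto (fun i => leftHausdorffEdist ((l i : Set X)) (μ : Set X)) atTop (nhds 0) ↔
        Tendsto (fun i => leftHausdorffEdist ((f (l i) : Set X)) ((f μ : Set X)))
          atTop (nhds 0)) :
    ∀ l μ : ↥S, (l : Set X) ⊆ (μ : Set X) ↔ ((f l : Set X)) ⊆ ((f μ : Set X)) := by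
  intro l μ
  have key : ∀ (a b : ↥S), ((a : Set X) ⊆ (b : Set X)) ↔
      Tendsto (fun _ : ℕ => leftHausdorffEdist (a : Set X) (b : Set X)) atTop (nhds 0) := by
    intro a b
    rw [← leftHausdorffEdist_eq_zero_iff (hS b b.2)]
    constructor
    · intro h; rw [h]; exact tendsto_const_nhds
    · intro h; exact tendsto_nhds_unique tendsto_const_nhds h
  rw [key l μ, key (f l) (f μ)]
  exact hf (fun _ => l) μ
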